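/- In the twisted Baby Fock model with γ_j = μ_j^{−1} β_j* + μ_j β_{−j} and λ_j = μ_j⁴: let Δ be the positive invertible diagonal operator on H_ε defined by Δ(x_A) = (∏_{j=1}^k λ_j^{χ_j − χ_{−j}}) x_A (where χ_i = 1 if i ∈ A and 0 otherwise). Then for every j ∈ {1, …, k}, Δ γ_j Δ^{−1} = λ_j γ_j, i.e. Δ γ_j = λ_j γ_j Δ. -/

import Mathlib

noncomputable section BabyFock

variable {I : Type*} [Fintype I] [LinearOrder I]

/-- The left creation operator `β_i*` of the Baby Fock model, acting on the Hilbert space with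
orthonormal basis `(x_A)_{A ⊆ I}`:  `β_i*(x_A) = (∏_{j ∈ A, j < i} ε i j) • x_{A ∪ {i}}` if
`i ∉ A`, and `β_i*(x_A) = 0` if `i ∈ A`. -/
def crea (ε : I → I → ℂ) (i : I) :
    EuclideanSpace ℂ (Finset I) →L[ℂ] EuclideanSpace ℂ (Finset I) :=
  Matrix.toEuclideanCLM (𝕜 := ℂ)
    (Matrix.of fun B A : Finset I =>
      if i ∉ A ∧ B = insert i A then ∏ j ∈ A.filter (· < i), ε i j else 0)

/-- The left annihilation operator `β_i` (the adjoint of `β_i*`):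
`β_i(x_A) = (∏_{j ∈ A, j < i} ε i j) • x_{A \ {i}}` if `i ∈ A`, and `0` otherwise. -/
def anni (ε : I → I → ℂ) (i : I) :
    EuclideanSpace ℂ (Finset I) →L[ℂ] EuclideanSpace ℂ (Finset I) :=
  Matrix.toEuclideanCLM (𝕜 := ℂ)
    (Matrix.of fun B A : Finset I =>
      if i ∈ A ∧ B = A.erase i then ∏ j ∈ A.filter (· < i), ε i j else 0)

/-- The right creation operator `α_i*`:
`α_i*(x_A) = (∏_{j ∈ A, j > i} ε i j) • x_{A ∪ {i}}` if `i ∉ A`, and `0` otherwise. -/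
def creaR (ε : I → I → ℂ) (i : I) :
    EuclideanSpace ℂ (Finset I) →L[ℂ] EuclideanSpace ℂ (Finset I) :=
  Matrix.toEuclideanCLM (𝕜 := ℂ)
    (Matrix.of fun B A : Finset I =>
      if i ∉ A ∧ B = insert i A then ∏ j ∈ A.filter (i < ·), ε i j else 0)

/-- The right annihilation operator `α_i` (the adjoint of `α_i*`):
`α_i(x_A) = (∏_{j ∈ A, j > i} ε i j) • x_{A \ {i}}` if `i ∈ A`, and `0` otherwise. -/
def anniR (ε : I → I → ℂ) (i : I) :
    EuclideanSpace ℂ (Finset I) →L[ℂ] EuclideanSpace ℂ (Finset I) :=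
  Matrix.toEuclideanCLM (𝕜 := ℂ)
    (Matrix.of fun B A : Finset I =>
      if i ∈ A ∧ B = A.erase i then ∏ j ∈ A.filter (i < ·), ε i j else 0)

end BabyFock

noncomputable section

/-- The index set `I = {−k, …, −1} ∪ {1, …, k}` of the twisted Baby Fock model, as a subtype
of `ℤ`, with its natural linear order. -/
abbrev Ik (k : ℕ) : Type := {i : ℤ // i ∈ (Finset.Icc (-(k : ℤ)) (k : ℤ)).erase 0}

/-- The map `i ↦ -i` on the index set. -/
def negI {k : ℕ} (i : Ik k) : Ik k :=
  ⟨-i.1, by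
    have h := i.2
    simp only [Finset.mem_erase, Finset.mem_Icc] at h ⊢
    omega⟩

/-- The map `i ↦ |i|` on the index set. -/
def absI {k : ℕ} (i : Ik k) : Ik k :=
  ⟨|i.1|, by
    have h := i.2
    simp only [Finset.mem_erase, Finset.mem_Icc] at h ⊢
    rcases abs_cases i.1 with h' | h' <;> omega⟩

/-- For `j ∈ {1, …, k}` (encoded as `j : Fin k`), the corresponding positive element of the
index set. -/
def posIdx {k : ℕ} (j : Fin k) : Ik k :=
  ⟨(j : ℤ) + 1, by
    have h := j.isLt
    simp only [Finset.mem_erase, Finset.mem_Icc]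
    omega⟩

/-- The generalized semi-circular operator `γ_j = μ_j⁻¹ β_j* + μ_j β_{−j}` of the twisted
Baby Fock model, for `j ∈ {1, …, k}`. -/
def gam {k : ℕ} (ε : Ik k → Ik k → ℂ) (μ : Fin k → ℝ) (j : Fin k) :
    EuclideanSpace ℂ (Finset (Ik k)) →L[ℂ] EuclideanSpace ℂ (Finset (Ik k)) :=
  ((μ j : ℂ))⁻¹ • crea ε (posIdx j) + (μ j : ℂ) • anni ε (negI (posIdx j))

end


section Helpers

variable {I : Type*} [Fintype I] [LinearOrder I]

lemma toEuclideanCLM_single_apply (M : Matrix (Finset I) (Finset I) ℂ) (A B : Finset I) :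
    Matrix.toEuclideanCLM (𝕜 := ℂ) M (EuclideanSpace.single A 1) B = M B A := by
  rw [show (Matrix.toEuclideanCLM (𝕜 := ℂ) M (EuclideanSpace.single A 1)) B =
    (WithLp.ofLp (Matrix.toEuclideanCLM (𝕜 := ℂ) M (EuclideanSpace.single A 1))) B from rfl,
    Matrix.ofLp_toEuclideanCLM]
  simp [Matrix.mulVec, dotProduct, Pi.single_apply]

lemma crea_single (ε : I → I → ℂ) (i : I) (A : Finset I) :
    crea ε i (EuclideanSpace.single A 1) =
      if i ∈ A then 0 else
        (∏ j ∈ A.filter (· < i), ε i j) • EuclideanSpace.single (insert i A) (1 : ℂ) := by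
  ext B
  rw [crea, toEuclideanCLM_single_apply]
  by_cases hi : i ∈ A
  · simp [hi]
  · simp only [Matrix.of_apply, hi, if_neg, not_false_iff, true_and]
    by_cases hB : B = insert i A <;>
      simp [hB, EuclideanSpace.single_apply]

lemma anni_single (ε : I → I → ℂ) (i : I) (A : Finset I) :
    anni ε i (EuclideanSpace.single A 1) =
      if i ∈ A then
        (∏ j ∈ A.filter (· < i), ε i j) • EuclideanSpace.single (A.erase i) (1 : ℂ)
      else 0 := by
  ext B
  rw [anni, toEuclideanCLM_single_apply]
  by_cases hi : i ∈ A
  · simp only [Matrix.of_apply, hi, true_and, if_pos]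
    by_cases hB : B = A.erase i <;>
      simp [hB, EuclideanSpace.single_apply]
  · simp [hi]

end Helpers


/-- The indicator `χ_i ∈ {0, 1}` of `i ∈ A`, as an integer. -/
def chi {k : ℕ} (A : Finset (Ik k)) (i : Ik k) : ℤ := if i ∈ A then 1 else 0

section IdxHelpers

variable {k : ℕ}

lemma posIdx_inj {j j' : Fin k} (h : posIdx j = posIdx j') : j = j' := by
  have h2 := Subtype.ext_iff.mp h
  simp only [posIdx] at h2
  exact Fin.ext (by omega)

lemma negI_posIdx_ne_posIdx (j j' : Fin k) : negI (posIdx j') ≠ posIdx j := by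
  intro h
  have h2 := Subtype.ext_iff.mp h
  simp only [negI, posIdx] at h2
  omega

lemma negI_posIdx_inj {j j' : Fin k} (h : negI (posIdx j) = negI (posIdx j')) : j = j' := by
  have h2 := Subtype.ext_iff.mp h
  simp only [negI, posIdx] at h2
  exact Fin.ext (by omega)

lemma prod_zpow_shift (μ : Fin k → ℝ) (hμ : ∀ j, 1 ≤ μ j) (j : Fin k)
    (e e' : Fin k → ℤ) (h : ∀ j', e' j' = e j' + (if j' = j then 1 else 0)) :
    ∏ j' : Fin k, ((μ j' : ℂ) ^ (4 : ℕ)) ^ (e' j') =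
      ((μ j : ℂ) ^ (4 : ℕ)) * ∏ j' : Fin k, ((μ j' : ℂ) ^ (4 : ℕ)) ^ (e j') := by
  have hne : ∀ j' : Fin k, ((μ j' : ℂ) ^ (4 : ℕ)) ≠ 0 := by
    intro j'
    have h1 := hμ j'
    exact pow_ne_zero _ (Complex.ofReal_ne_zero.mpr (by linarith))
  have hsplit : ∀ j' : Fin k,
      ((μ j' : ℂ) ^ (4 : ℕ)) ^ (e' j') =
        ((μ j' : ℂ) ^ (4 : ℕ)) ^ (e j') * (if j' = j then ((μ j' : ℂ) ^ (4 : ℕ)) else 1) := by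
    intro j'
    rw [h j']
    rw [zpow_add₀ (hne j')]
    congr 1
    split <;> simp
  simp_rw [hsplit]
  rw [Finset.prod_mul_distrib, Finset.prod_ite_eq' Finset.univ j
    (fun j' => ((μ j' : ℂ) ^ (4 : ℕ)))]
  simp [mul_comm]

lemma chi_insert_pos (A : Finset (Ik k)) (j j' : Fin k) (hp : posIdx j ∉ A) :
    chi (insert (posIdx j) A) (posIdx j') =
      chi A (posIdx j') + (if j' = j then 1 else 0) := by
  by_cases hjj : j' = j
  · subst hjj
    simp [chi, hp]
  · have hne : posIdx j' ≠ posIdx j := fun h => hjj (posIdx_inj h)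
    simp [chi, Finset.mem_insert, hne, hjj]

lemma chi_insert_neg (A : Finset (Ik k)) (j j' : Fin k) :
    chi (insert (posIdx j) A) (negI (posIdx j')) = chi A (negI (posIdx j')) := by
  simp [chi, Finset.mem_insert, negI_posIdx_ne_posIdx j j']

lemma chi_erase_pos (A : Finset (Ik k)) (j j' : Fin k) :
    chi (A.erase (negI (posIdx j))) (posIdx j') = chi A (posIdx j') := by
  have hne : posIdx j' ≠ negI (posIdx j) := fun h => negI_posIdx_ne_posIdx j' j h.symm
  simp [chi, Finset.mem_erase, hne]

lemma chi_erase_neg (A : Finset (Ik k)) (j j' : Fin k) (hn : negI (posIdx j) ∈ A) :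
    chi (A.erase (negI (posIdx j))) (negI (posIdx j')) =
      chi A (negI (posIdx j')) - (if j' = j then 1 else 0) := by
  by_cases hjj : j' = j
  · subst hjj
    simp [chi, Finset.mem_erase, hn]
  · have hne : negI (posIdx j') ≠ negI (posIdx j) := fun h => hjj (negI_posIdx_inj h.symm).symm
    simp [chi, Finset.mem_erase, hne, hjj]

end IdxHelpers

/-- In the twisted Baby Fock model, let `Δ` be the positive invertible
diagonal operator with `Δ x_A = (∏_j λ_j^{χ_j − χ_{−j}}) x_A`, where `λ_j = μ_j⁴`.  Then for
every `j ∈ {1, …, k}` one has `Δ γ_j Δ⁻¹ = λ_j γ_j`, i.e. `Δ γ_j = λ_j γ_j Δ`. -/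
theorem stmt14 (k : ℕ) (hk : 1 ≤ k) (ε : Ik k → Ik k → ℂ)
    (hval : ∀ i j, ε i j = 1 ∨ ε i j = -1)
    (hsym : ∀ i j, ε i j = ε j i)
    (hdiag : ∀ i, ε i i = -1)
    (htw : ∀ i j, ε i j = ε (absI i) (absI j))
    (μ : Fin k → ℝ) (hμ : ∀ j, 1 ≤ μ j)
    (Δ : EuclideanSpace ℂ (Finset (Ik k)) →L[ℂ] EuclideanSpace ℂ (Finset (Ik k)))
    (hΔpos : Δ.IsPositive) (hΔinv : IsUnit Δ)
    (hΔ : ∀ A : Finset (Ik k),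
      Δ (EuclideanSpace.single A (1 : ℂ)) =
        (∏ j : Fin k, ((μ j : ℂ) ^ (4 : ℕ)) ^ (chi A (posIdx j) - chi A (negI (posIdx j)))) •
          EuclideanSpace.single A (1 : ℂ)) :
    ∀ j : Fin k, Δ * gam ε μ j = ((μ j : ℂ) ^ (4 : ℕ)) • (gam ε μ j * Δ) := by
  intro j
  have hne0 : (μ j : ℂ) ≠ 0 := Complex.ofReal_ne_zero.mpr (by linarith [hμ j])
  set lam : ℂ := (μ j : ℂ) ^ (4 : ℕ) with hlam
  set W : Finset (Ik k) → ℂ := fun S =>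
    ∏ j' : Fin k, ((μ j' : ℂ) ^ (4 : ℕ)) ^ (chi S (posIdx j') - chi S (negI (posIdx j'))) with hWdef
  have hΔ' : ∀ A : Finset (Ik k),
      Δ (EuclideanSpace.single A (1 : ℂ)) = W A • EuclideanSpace.single A (1 : ℂ) := hΔ
  have hwins : ∀ A : Finset (Ik k), posIdx j ∉ A → W (insert (posIdx j) A) = lam * W A := by
    intro A hp
    refine prod_zpow_shift μ hμ j _ _ ?_
    intro j'
    rw [chi_insert_pos A j j' hp, chi_insert_neg A j j']
    ring
  have hwerase : ∀ A : Finset (Ik k), negI (posIdx j) ∈ A →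
      W (A.erase (negI (posIdx j))) = lam * W A := by
    intro A hn
    refine prod_zpow_shift μ hμ j _ _ ?_
    intro j'
    rw [chi_erase_pos A j j', chi_erase_neg A j j' hn]
    ring
  have key : ∀ A : Finset (Ik k),
      (Δ * gam ε μ j) (EuclideanSpace.single A (1 : ℂ)) =
        (lam • (gam ε μ j * Δ)) (EuclideanSpace.single A (1 : ℂ)) := by
    intro A
    simp only [ContinuousLinearMap.mul_apply, ContinuousLinearMap.smul_apply, gam,
      ContinuousLinearMap.add_apply, hΔ' A, map_add, map_smul, crea_single, anni_single]
    erw [crea_single, anni_single]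
    by_cases hp : posIdx j ∈ A <;> by_cases hn : negI (posIdx j) ∈ A <;>
      simp only [hp, hn, if_true, if_false, smul_zero, map_zero, map_smul, hΔ',
        zero_add, add_zero, smul_add, ite_true, ite_false]
    · erw [hΔ']
      erw [hwerase A hn]
      simp only [smul_smul]
      ring_nf
      rfl
    · erw [hΔ', hΔ']
      erw [hwins A hp, hwerase A hn]
      simp only [smul_smul, smul_add]
      ring_nf
      rfl
    · erw [hΔ']
      erw [hwins A hp]
      simp only [smul_smul]
      ring_nf
      rfl
  apply ContinuousLinearMap.coe_inj.mp
  apply Module.Basis.ext (PiLp.basisFun 2 ℂ (Finset (Ik k)))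
  intro A
  have hb : (PiLp.basisFun 2 ℂ (Finset (Ik k))) A = EuclideanSpace.single A (1 : ℂ) := by
    rw [PiLp.basisFun_apply]
  rw [hb]
  exact key A
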